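/- For the conjugate operator A on the binary tree, the matrix elements satisfy Σ_w |⟨δ_v, iA δ_w⟩| = O(|v|) uniformly in v; in particular Σ_w |⟨δ_v, iA δ_w⟩| ≤ C(|v|+1) for an absolute constant C. -/

import Mathlib

noncomputable section

/-- The sphere S_r of the binary tree, identified with {0,1}^r. -/
abbrev Sph (r : ℕ) := {l : List Bool // l.length = r}

/-- Index set for the Haar basis of ℓ²(S_r): `none` is the constant function
(level 0); `some p`, with p a binary word of length n−1 (1 ≤ n ≤ r), indexes
the level-n Haar function supported on the dyadic block of the 2^{r−n+1}
vertices having suffix p. -/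
abbrev HaarIdx (r : ℕ) := Option {p : List Bool // p.length < r}

/-- The level n(α) of a Haar basis function. -/
def haarLevel {r : ℕ} : HaarIdx r → ℕ
  | none => 0
  | some p => p.1.length + 1

/-- The Haar basis function ρ_α of ℓ²(S_r): the constant 2^{−r/2} at level 0,
and at level n the function supported on a dyadic block of size 2^{r−n+1}
taking the values ±2^{−(r−n+1)/2} on its two halves. -/
def haarFn {r : ℕ} (α : HaarIdx r) (v : Sph r) : ℂ :=
  match α with
  | none => ((Real.sqrt (2 ^ r))⁻¹ : ℝ)
  | some p =>
      if p.1 <:+ v.1 then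
        (if v.1.getD (r - p.1.length - 1) true then 1 else -1)
          * ((Real.sqrt (2 ^ (r - p.1.length)))⁻¹ : ℝ)
      else 0

/-- The Haar-level operator N = Σ_α n(α) ⟨ρ_α, ·⟩ ρ_α on ℓ²(S_r). -/
def NOp {r : ℕ} (φ : Sph r → ℂ) : Sph r → ℂ :=
  fun z => ∑' α : HaarIdx r,
    (haarLevel α : ℂ) * haarFn α z * ∑' w : Sph r, (starRingEnd ℂ) (haarFn α w) * φ w

/-- The standard basis vector δ_w. -/
def delta {r : ℕ} (w : Sph r) : Sph r → ℂ := fun u => if u = w then 1 else 0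

/-- The matrix element ⟨δ_z, N δ_w⟩. -/
def Nent {r : ℕ} (z w : Sph r) : ℂ := NOp (delta w) z

/-- The matrix element ⟨δ_v, N δ_w⟩ on ℓ²(V) of the binary tree V = List Bool
(N acts sphere-by-sphere; it vanishes unless |v| = |w|). -/
def NentTree (v w : List Bool) : ℂ :=
  if h : v.length = w.length then
    Nent (⟨v, rfl⟩ : Sph v.length) (⟨w, h.symm⟩ : Sph v.length)
  else 0

/-- The matrix elements ⟨δ_v, iA δ_w⟩ of the conjugate operator
iA = (R − N + 1/2)Π − Π*(R − N + 1/2): they vanish unless |w| = |v| ± 1, with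
⟨δ_v, iAδ_w⟩ = (|v|+1/2)δ(w→v) − Σ_{z:w→z}⟨δ_v, Nδ_z⟩ if |w| = |v| − 1, and
⟨δ_v, iAδ_w⟩ = −(|w|+1/2)δ(v→w) + Σ_{z:v→z}⟨δ_z, Nδ_w⟩ if |w| = |v| + 1
(w→v means w is the parent of v, i.e. v = b :: w). -/
def iAent (v w : List Bool) : ℂ :=
  if w.length + 1 = v.length then
    (((v.length : ℝ) + 1/2 : ℝ) : ℂ) * (if v.tail = w ∧ v ≠ [] then 1 else 0)
      - (NentTree v (true :: w) + NentTree v (false :: w))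
  else if v.length + 1 = w.length then
    -((((w.length : ℝ) + 1/2 : ℝ) : ℂ)) * (if w.tail = v ∧ w ≠ [] then 1 else 0)
      + (NentTree (true :: v) w + NentTree (false :: v) w)
  else 0

/-- longest common prefix length -/
def cpl : List Bool → List Bool → ℕ
  | a :: as, b :: bs => if a = b then cpl as bs + 1 else 0
  | _, _ => 0

@[simp] lemma cpl_nil_left (l : List Bool) : cpl [] l = 0 := by cases l <;> rfl
@[simp] lemma cpl_nil_right (l : List Bool) : cpl l [] = 0 := by cases l <;> rfl
@[simp] lemma cpl_cons (a b : Bool) (as bs : List Bool) :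
    cpl (a :: as) (b :: bs) = if a = b then cpl as bs + 1 else 0 := rfl

lemma cpl_comm : ∀ a b : List Bool, cpl a b = cpl b a
  | [], b => by simp
  | a :: as, [] => by simp
  | a :: as, b :: bs => by
      by_cases h : a = b
      · rw [cpl_cons, cpl_cons, if_pos h, if_pos h.symm, cpl_comm as bs]
      · rw [cpl_cons, cpl_cons, if_neg h, if_neg (fun hh => h hh.symm)]

lemma cpl_le_left : ∀ a b : List Bool, cpl a b ≤ a.length
  | [], b => by simp
  | a :: as, [] => by simp
  | a :: as, b :: bs => by
      by_cases h : a = b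
      · rw [cpl_cons, if_pos h, List.length_cons]
        exact Nat.succ_le_succ (cpl_le_left as bs)
      · rw [cpl_cons, if_neg h]; exact Nat.zero_le _

lemma cpl_le_right (a b : List Bool) : cpl a b ≤ b.length := by
  rw [cpl_comm]; exact cpl_le_left b a

lemma cpl_self : ∀ a : List Bool, cpl a a = a.length
  | [] => rfl
  | a :: as => by rw [cpl_cons, if_pos rfl, cpl_self as, List.length_cons]

lemma take_cpl_eq : ∀ a b : List Bool, a.take (cpl a b) = b.take (cpl a b)
  | [], b => by simp
  | a :: as, [] => by simp
  | a :: as, b :: bs => by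
      by_cases h : a = b
      · rw [cpl_cons, if_pos h, List.take_succ_cons, List.take_succ_cons, h,
          take_cpl_eq as bs]
      · rw [cpl_cons, if_neg h]; simp

lemma le_cpl_of_take_eq : ∀ (k : ℕ) (a b : List Bool), k ≤ a.length → k ≤ b.length →
    a.take k = b.take k → k ≤ cpl a b
  | 0, _, _, _, _, _ => Nat.zero_le _
  | k+1, [], b, h, _, _ => by simp at h
  | k+1, a :: as, [], _, h, _ => by simp at h
  | k+1, a :: as, b :: bs, h1, h2, he => by
      rw [List.take_succ_cons, List.take_succ_cons, List.cons.injEq] at he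
      rw [cpl_cons, if_pos he.1]
      exact Nat.succ_le_succ (le_cpl_of_take_eq k as bs (by simpa using h1)
        (by simpa using h2) he.2)

lemma take_eq_of_le_cpl {k : ℕ} {a b : List Bool} (h : k ≤ cpl a b) :
    a.take k = b.take k := by
  have h1 : a.take k = (a.take (cpl a b)).take k := by
    rw [List.take_take, Nat.min_eq_left h]
  rw [h1, take_cpl_eq, List.take_take, Nat.min_eq_left h]

lemma getD_cpl_ne : ∀ a b : List Bool, cpl a b < a.length → cpl a b < b.length →
    a.getD (cpl a b) true ≠ b.getD (cpl a b) true
  | [], b, h, _ => by simp at h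
  | a :: as, [], _, h => by simp at h
  | a :: as, b :: bs, h1, h2 => by
      by_cases h : a = b
      · rw [cpl_cons, if_pos h] at h1 h2 ⊢
        simpa using getD_cpl_ne as bs (by simpa using h1) (by simpa using h2)
      · rw [cpl_cons, if_neg h]
        simpa using h

lemma getD_lt_cpl {k : ℕ} {a b : List Bool} (h : k < cpl a b) :
    a.getD k true = b.getD k true := by
  have ha : k < a.length := lt_of_lt_of_le h (cpl_le_left a b)
  have hb : k < b.length := lt_of_lt_of_le h (cpl_le_right a b)
  have ht : a.take (k+1) = b.take (k+1) := take_eq_of_le_cpl h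
  rw [List.getD_eq_getElem _ _ ha, List.getD_eq_getElem _ _ hb]
  have h1 : a[k] = (a.take (k+1))[k]'(by simp [ha]) := (List.getElem_take).symm
  have h2 : b[k] = (b.take (k+1))[k]'(by simp [hb]) := (List.getElem_take).symm
  rw [h1, h2]
  congr 1

lemma cpl_append_right : ∀ a b x : List Bool, ¬ b <+: a → cpl a (b ++ x) = cpl a b
  | a, [], x, h => absurd (List.nil_prefix) h
  | [], b :: bs, x, h => by simp
  | a :: as, b :: bs, x, h => by
      by_cases hab : a = b
      · have hnb : ¬ bs <+: as := fun hp => h (List.cons_prefix_cons.mpr ⟨hab.symm, hp⟩)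
        rw [List.cons_append, cpl_cons, cpl_cons, if_pos hab, if_pos hab,
          cpl_append_right as bs x hnb]
      · rw [List.cons_append, cpl_cons, cpl_cons, if_neg hab, if_neg hab]

lemma cpl_append_left (a b x : List Bool) (h : ¬ a <+: b) : cpl (a ++ x) b = cpl a b := by
  rw [cpl_comm, cpl_append_right b a x h, cpl_comm]

lemma cpl_append_same : ∀ x a b : List Bool, cpl (x ++ a) (x ++ b) = x.length + cpl a b
  | [], a, b => by simp
  | c :: x, a, b => by
      rw [List.cons_append, List.cons_append, cpl_cons, if_pos rfl,
        cpl_append_same x a b, List.length_cons]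
      omega

/-- the suffix of `z` of length `k` -/
def sfx (z : List Bool) (k : ℕ) : List Bool := (z.reverse.take k).reverse

lemma length_sfx {z : List Bool} {k : ℕ} (h : k ≤ z.length) : (sfx z k).length = k := by
  simp [sfx]; omega

lemma sfx_suffix (z : List Bool) (k : ℕ) : sfx z k <:+ z :=
  List.reverse_prefix.mp (by simpa [sfx] using List.take_prefix k z.reverse)

lemma eq_sfx_of_suffix {p z : List Bool} (h : p <:+ z) : p = sfx z p.length := by
  have h1 : p.reverse <+: z.reverse := List.reverse_prefix.mpr h
  have h2 : p.reverse = z.reverse.take p.reverse.length := List.prefix_iff_eq_take.mp h1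
  have h3 := congrArg List.reverse h2
  simpa [sfx] using h3

lemma sfx_suffix_iff {z w : List Bool} {k : ℕ} (hz : k ≤ z.length) (hw : k ≤ w.length) :
    sfx z k <:+ w ↔ k ≤ cpl z.reverse w.reverse := by
  constructor
  · intro h
    have h1 : z.reverse.take k <+: w.reverse := by
      simpa [sfx] using List.reverse_prefix.mpr h
    have h2 : z.reverse.take k = w.reverse.take k := by
      have h3 := List.prefix_iff_eq_take.mp h1
      rwa [List.length_take, List.length_reverse, Nat.min_eq_left hz] at h3
    exact le_cpl_of_take_eq k _ _ (by simpa using hz) (by simpa using hw) h2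
  · intro h
    have h2 : z.reverse.take k = w.reverse.take k := take_eq_of_le_cpl h
    have h1 : z.reverse.take k <+: w.reverse := h2 ▸ List.take_prefix k w.reverse
    exact List.reverse_prefix.mp (by simpa [sfx] using h1)

lemma getD_rev {z : List Bool} {k : ℕ} (h : k < z.length) :
    z.getD (z.length - 1 - k) true = z.reverse.getD k true := by
  rw [List.getD_eq_getElem _ _ (by omega), List.getD_eq_getElem _ _ (by simpa using h)]
  exact (List.getElem_reverse _).symm


/-! ### Fintype instances -/

instance sphFintype (r : ℕ) : Fintype (Sph r) :=
  inferInstanceAs (Fintype (List.Vector Bool r))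

noncomputable instance (r : ℕ) : Fintype {p : List Bool // p.length < r} :=
  (List.finite_length_lt Bool r).fintype

lemma card_Sph (r : ℕ) : Fintype.card (Sph r) = 2 ^ r := by
  have h : Fintype.card (List.Vector Bool r) = Fintype.card Bool ^ r := card_vector r
  rw [Fintype.card_bool] at h
  exact h

/-! ### The summand -/

def Gfun (r : ℕ) (zl wl : List Bool) (q : List Bool) : ℂ :=
  ((q.length + 1 : ℕ) : ℂ) *
    (if q <:+ zl then
        (if zl.getD (r - q.length - 1) true then (1:ℂ) else -1)
          * ((Real.sqrt (2 ^ (r - q.length)))⁻¹ : ℝ)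
      else 0) *
    (starRingEnd ℂ)
      (if q <:+ wl then
        (if wl.getD (r - q.length - 1) true then (1:ℂ) else -1)
          * ((Real.sqrt (2 ^ (r - q.length)))⁻¹ : ℝ)
      else 0)

lemma Gfun_vanish (r : ℕ) (zl wl q : List Bool) (h : ¬ q <:+ zl) :
    Gfun r zl wl q = 0 := by
  rw [Gfun, if_neg h, mul_zero, zero_mul]

lemma hsome {r : ℕ} (z w : Sph r) (p : {p : List Bool // p.length < r}) :
    (haarLevel (some p) : ℂ) * haarFn (some p) z * (starRingEnd ℂ) (haarFn (some p) w)
      = Gfun r z.1 w.1 p.1 := rfl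

lemma sum_subtype_eq {r : ℕ} (z : Sph r) (G : List Bool → ℂ)
    (hvan : ∀ q : List Bool, ¬ q <:+ z.1 → G q = 0) :
    (∑ p : {p : List Bool // p.length < r}, G p.1) = ∑ k ∈ Finset.range r, G (sfx z.1 k) := by
  have hzl : z.1.length = r := z.2
  have key : ∀ p : {p : List Bool // p.length < r},
      G p.1 = ∑ k ∈ Finset.range r, if p.1 = sfx z.1 k then G (sfx z.1 k) else 0 := by
    intro p
    by_cases hs : p.1 <:+ z.1
    · have hp : p.1 = sfx z.1 p.1.length := eq_sfx_of_suffix hs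
      rw [Finset.sum_eq_single p.1.length]
      · rw [if_pos hp, ← hp]
      · intro k hk hne
        rw [if_neg]
        intro hc
        have hl : (sfx z.1 k).length = k :=
          length_sfx (by rw [hzl]; exact le_of_lt (Finset.mem_range.mp hk))
        exact hne (((congrArg List.length hc).trans hl).symm ▸ rfl)
      · intro hnm
        exact absurd (Finset.mem_range.mpr p.2) hnm
    · rw [hvan _ hs]
      symm
      apply Finset.sum_eq_zero
      intro k _
      rw [if_neg]
      intro hc
      exact hs (hc ▸ sfx_suffix z.1 k)
  rw [Finset.sum_congr rfl (fun p _ => key p), Finset.sum_comm]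
  apply Finset.sum_congr rfl
  intro k hk
  have hk' : (sfx z.1 k).length < r := by
    rw [length_sfx (by rw [hzl]; exact le_of_lt (Finset.mem_range.mp hk))]
    exact Finset.mem_range.mp hk
  have step : ∀ p : {p : List Bool // p.length < r},
      (if p.1 = sfx z.1 k then G (sfx z.1 k) else 0)
        = (if p = ⟨sfx z.1 k, hk'⟩ then G (sfx z.1 k) else 0) := by
    intro p
    by_cases hp : p.1 = sfx z.1 k
    · rw [if_pos hp, if_pos (Subtype.ext hp)]
    · rw [if_neg hp, if_neg (fun hq => hp (congrArg Subtype.val hq))]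
  rw [Finset.sum_congr rfl (fun p _ => step p),
    Finset.sum_ite_eq' Finset.univ (⟨sfx z.1 k, hk'⟩ : {p : List Bool // p.length < r})
      (fun _ => G (sfx z.1 k)), if_pos (Finset.mem_univ _)]

lemma Nent_sum {r : ℕ} (z w : Sph r) :
    Nent z w = ∑ k ∈ Finset.range r, Gfun r z.1 w.1 (sfx z.1 k) := by
  have h1 : Nent z w
      = ∑ α : HaarIdx r, (haarLevel α : ℂ) * haarFn α z * (starRingEnd ℂ) (haarFn α w) := by
    simp only [Nent, NOp]
    rw [tsum_fintype]
    refine Finset.sum_congr rfl fun α _ => ?_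
    congr 1
    rw [tsum_fintype]
    simp [delta, mul_ite, mul_one, mul_zero]
  rw [h1, Fintype.sum_option]
  have hnone : (haarLevel (none : HaarIdx r) : ℂ) * haarFn none z
      * (starRingEnd ℂ) (haarFn none w) = 0 := by
    simp [haarLevel]
  rw [hnone, zero_add, Finset.sum_congr rfl (fun p _ => hsome z w p)]
  exact sum_subtype_eq z _ (Gfun_vanish r z.1 w.1)

lemma pow_inv_split {r k : ℕ} (h : k ≤ r) :
    ((2:ℝ)^(r-k))⁻¹ = 2^k * ((2:ℝ)^r)⁻¹ := by
  have h1 : (2:ℝ)^(r-k) * 2^k = 2^r := by rw [← pow_add]; congr 1; omega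
  calc ((2:ℝ)^(r-k))⁻¹ = ((2:ℝ)^(r-k))⁻¹ * ((2^k) * ((2:ℝ)^k)⁻¹) := by
        rw [mul_inv_cancel₀ (by positivity : ((2:ℝ)^k) ≠ 0), mul_one]
    _ = 2^k * ((2:ℝ)^(r-k) * 2^k)⁻¹ := by rw [mul_inv]; ring
    _ = 2^k * ((2:ℝ)^r)⁻¹ := by rw [h1]

lemma sum_geom_aux : ∀ n : ℕ, ∑ k ∈ Finset.range n, ((k:ℝ)+1) * 2^k = ((n:ℝ) - 1) * 2^n + 1
  | 0 => by simp
  | n+1 => by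
      rw [Finset.sum_range_succ, sum_geom_aux n]
      push_cast
      ring

lemma sum_pow_aux (r : ℕ) : ∑ k ∈ Finset.range r, ((k:ℝ)+1) * ((2:ℝ)^(r-k))⁻¹
    = (r:ℝ) - 1 + ((2:ℝ)^r)⁻¹ := by
  have h : ∀ k ∈ Finset.range r,
      ((k:ℝ)+1) * ((2:ℝ)^(r-k))⁻¹ = (((k:ℝ)+1) * 2^k) * ((2:ℝ)^r)⁻¹ := by
    intro k hk
    rw [pow_inv_split (le_of_lt (Finset.mem_range.mp hk))]
    ring
  rw [Finset.sum_congr rfl h, ← Finset.sum_mul, sum_geom_aux]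
  have h3 : (2:ℝ)^r ≠ 0 := by positivity
  field_simp

lemma Gfun_sfx {r : ℕ} (z w : Sph r) {k : ℕ} (hk : k < r) :
    Gfun r z.1 w.1 (sfx z.1 k) =
      (((if k ≤ cpl z.1.reverse w.1.reverse then
          ((k:ℝ)+1) * (if k < cpl z.1.reverse w.1.reverse then (1:ℝ) else -1)
            * ((2:ℝ)^(r-k))⁻¹
        else 0) : ℝ) : ℂ) := by
  have hzl : z.1.length = r := z.2
  have hwl : w.1.length = r := w.2
  have hlen : (sfx z.1 k).length = k := length_sfx (by omega)
  have hsufz : sfx z.1 k <:+ z.1 := sfx_suffix _ _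
  set m := cpl z.1.reverse w.1.reverse with hm
  rw [Gfun, hlen, if_pos hsufz]
  by_cases hkm : k ≤ m
  · have hsufw : sfx z.1 k <:+ w.1 := (sfx_suffix_iff (by omega) (by omega)).mpr hkm
    rw [if_pos hsufw, if_pos hkm]
    set bz := z.1.getD (r - k - 1) true with hbz
    set bw := w.1.getD (r - k - 1) true with hbw
    have hbz' : bz = z.1.reverse.getD k true := by
      rw [hbz, show r - k - 1 = z.1.length - 1 - k by omega]
      exact getD_rev (by omega)
    have hbw' : bw = w.1.reverse.getD k true := by
      rw [hbw, show r - k - 1 = w.1.length - 1 - k by omega]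
      exact getD_rev (by omega)
    set c : ℝ := (Real.sqrt (2 ^ (r - k)))⁻¹ with hc
    have hcpos : (0:ℝ) ≤ (2:ℝ) ^ (r-k) := by positivity
    have hcc : (c:ℂ) * (c:ℂ) = (((2:ℝ)^(r-k))⁻¹ : ℝ) := by
      rw [← Complex.ofReal_mul]
      congr 1
      rw [hc, ← mul_inv, Real.mul_self_sqrt hcpos]
    have hconj : (starRingEnd ℂ) ((if bw then (1:ℂ) else -1) * (c:ℂ))
        = (if bw then (1:ℂ) else -1) * (c:ℂ) := by
      rw [map_mul, Complex.conj_ofReal]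
      congr 1
      cases bw <;> simp
    rw [hconj]
    have hsign : (if bz then (1:ℂ) else -1) * (if bw then (1:ℂ) else -1)
        = if k < m then 1 else -1 := by
      by_cases hlt : k < m
      · have hbb : bz = bw := by rw [hbz', hbw']; exact getD_lt_cpl hlt
        rw [hbb, if_pos hlt]
        cases bw <;> norm_num
      · have hkm' : k = m := by omega
        have hbb : bz ≠ bw := by
          rw [hbz', hbw', hkm']
          exact getD_cpl_ne _ _ (by simp [hzl]; omega) (by simp [hwl]; omega)
        rw [if_neg hlt]
        cases hc1 : bz <;> cases hc2 : bw <;> rw [hc1, hc2] at hbb <;> simp_all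
    calc ((k + 1 : ℕ) : ℂ) * ((if bz then (1:ℂ) else -1) * (c:ℂ))
          * ((if bw then (1:ℂ) else -1) * (c:ℂ))
        = ((k + 1 : ℕ) : ℂ) * ((if bz then (1:ℂ) else -1) * (if bw then (1:ℂ) else -1))
          * ((c:ℂ) * (c:ℂ)) := by ring
      _ = ((k + 1 : ℕ) : ℂ) * (if k < m then (1:ℂ) else -1) * (((2:ℝ)^(r-k))⁻¹ : ℝ) := by
          rw [hsign, hcc]
      _ = _ := by split_ifs <;> push_cast <;> ring
  · have hsufw : ¬ sfx z.1 k <:+ w.1 :=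
      fun h => hkm ((sfx_suffix_iff (by omega) (by omega)).mp h)
    rw [if_neg hsufw, map_zero, mul_zero, if_neg hkm, Complex.ofReal_zero]

lemma real_sum_eval (r m : ℕ) (hm : m ≤ r) :
    ∑ k ∈ Finset.range r, (if k ≤ m then
        ((k:ℝ)+1) * (if k < m then (1:ℝ) else -1) * ((2:ℝ)^(r-k))⁻¹ else 0)
    = (if m = r then ((r:ℝ)+1) else 0) + ((2:ℝ)^r)⁻¹ - 2^(m+1) * ((2:ℝ)^r)⁻¹ := by
  have h2 : (2:ℝ)^r ≠ 0 := by positivity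
  rcases Nat.lt_or_ge m r with hlt | hge
  · rw [if_neg (by omega)]
    rw [← Finset.sum_subset (Finset.range_subset_range.mpr (show m+1 ≤ r by omega))
      (fun k _ hk => by rw [if_neg (by simp at hk; omega)])]
    rw [Finset.sum_range_succ, if_pos (le_refl m), if_neg (lt_irrefl m)]
    have hstep : ∀ k ∈ Finset.range m, (if k ≤ m then
        ((k:ℝ)+1) * (if k < m then (1:ℝ) else -1) * ((2:ℝ)^(r-k))⁻¹ else 0)
        = ((k:ℝ)+1) * ((2:ℝ)^(r-k))⁻¹ := by
      intro k hk
      have hk' : k < m := Finset.mem_range.mp hk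
      rw [if_pos (by omega), if_pos hk']
      ring
    rw [Finset.sum_congr rfl hstep]
    have hsum : ∑ k ∈ Finset.range m, ((k:ℝ)+1) * ((2:ℝ)^(r-k))⁻¹
        = (((m:ℝ) - 1) * 2^m + 1) * ((2:ℝ)^r)⁻¹ := by
      have h : ∀ k ∈ Finset.range m,
          ((k:ℝ)+1) * ((2:ℝ)^(r-k))⁻¹ = (((k:ℝ)+1) * 2^k) * ((2:ℝ)^r)⁻¹ := by
        intro k hk
        rw [pow_inv_split (show k ≤ r by have := Finset.mem_range.mp hk; omega)]
        ring
      rw [Finset.sum_congr rfl h, ← Finset.sum_mul, sum_geom_aux]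
    rw [hsum, pow_inv_split (show m ≤ r by omega), pow_succ]
    ring
  · have hmr : m = r := by omega
    subst hmr
    rw [if_pos rfl]
    have hstep : ∀ k ∈ Finset.range m, (if k ≤ m then
        ((k:ℝ)+1) * (if k < m then (1:ℝ) else -1) * ((2:ℝ)^(m-k))⁻¹ else 0)
        = ((k:ℝ)+1) * ((2:ℝ)^(m-k))⁻¹ := by
      intro k hk
      have hk' : k < m := Finset.mem_range.mp hk
      rw [if_pos (by omega), if_pos hk']
      ring
    rw [Finset.sum_congr rfl hstep, sum_pow_aux, pow_succ]
    field_simp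
    ring

lemma cpl_rev_le {r : ℕ} (z w : Sph r) : cpl z.1.reverse w.1.reverse ≤ r := by
  have := cpl_le_left z.1.reverse w.1.reverse
  simpa [z.2] using this

lemma cpl_rev_eq_iff {r : ℕ} (z w : Sph r) :
    cpl z.1.reverse w.1.reverse = r ↔ z = w := by
  constructor
  · intro h
    have h3 : z.1.reverse.take r = w.1.reverse.take r := take_eq_of_le_cpl (le_of_eq h.symm)
    have hz : z.1.reverse.take r = z.1.reverse :=
      List.take_of_length_le (by simp [z.2])
    have hw : w.1.reverse.take r = w.1.reverse :=
      List.take_of_length_le (by simp [w.2])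
    rw [hz, hw] at h3
    exact Subtype.ext (List.reverse_injective h3)
  · intro h
    subst h
    rw [cpl_self, List.length_reverse, z.2]

lemma Nent_eq {r : ℕ} (z w : Sph r) :
    Nent z w = ((((if z = w then ((r:ℝ) + 1) else 0) + ((2:ℝ) ^ r)⁻¹
        - 2 ^ (cpl z.1.reverse w.1.reverse + 1) * ((2:ℝ) ^ r)⁻¹) : ℝ) : ℂ) := by
  rw [Nent_sum]
  rw [Finset.sum_congr rfl (fun k hk => Gfun_sfx z w (Finset.mem_range.mp hk))]
  rw [← Complex.ofReal_sum]
  rw [real_sum_eval r (cpl z.1.reverse w.1.reverse) (cpl_rev_le z w)]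
  congr 2
  by_cases h : z = w
  · rw [if_pos ((cpl_rev_eq_iff z w).mpr h), if_pos h]
  · rw [if_neg (fun hh => h ((cpl_rev_eq_iff z w).mp hh)), if_neg h]

lemma NentTree_eq (v u : List Bool) (h : v.length = u.length) :
    NentTree v u = ((((if v = u then ((v.length:ℝ) + 1) else 0) + ((2:ℝ)^v.length)⁻¹
      - 2 ^ (cpl v.reverse u.reverse + 1) * ((2:ℝ)^v.length)⁻¹) : ℝ) : ℂ) := by
  rw [NentTree, dif_pos h, Nent_eq]
  congr 2
  by_cases hvu : v = u
  · rw [if_pos (by exact Subtype.ext hvu), if_pos hvu]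
  · rw [if_neg (fun hh => hvu (congrArg Subtype.val hh)), if_neg hvu]

/-! ### Pointwise bounds on the entries of iA -/

lemma norm_ofReal_le {x y : ℝ} (h1 : -y ≤ x) (h2 : x ≤ y) : ‖((x:ℝ):ℂ)‖ ≤ y := by
  rw [Complex.norm_real, Real.norm_eq_abs]
  exact abs_le.mpr ⟨h1, h2⟩

lemma one_le_two_pow_real (n : ℕ) : (1:ℝ) ≤ 2 ^ n :=
  one_le_pow₀ (by norm_num)

lemma inv_two_pow_le_one (n : ℕ) : ((2:ℝ) ^ n)⁻¹ ≤ 1 := by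
  have h0 : (0:ℝ) < ((2:ℝ) ^ n)⁻¹ := by positivity
  nlinarith [mul_nonneg (sub_nonneg.mpr (one_le_two_pow_real n)) h0.le,
    mul_inv_cancel₀ (show ((2:ℝ)^n) ≠ 0 by positivity)]

lemma down_bound (v : List Bool) (w : Sph (v.length - 1)) :
    ‖iAent v w.1‖ ≤ (if w.1 = v.tail then (5/2 : ℝ) else 0)
      + 4 * 2 ^ (cpl v.reverse w.1.reverse) * ((2:ℝ) ^ v.length)⁻¹ := by
  have hw : w.1.length = v.length - 1 := w.2
  have hpos : (0:ℝ) < ((2:ℝ) ^ v.length)⁻¹ := by positivity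
  have hile := inv_two_pow_le_one v.length
  rcases Nat.eq_zero_or_pos v.length with hr | hr
  · have h1 : ¬ (w.1.length + 1 = v.length) := by omega
    have h2 : ¬ (v.length + 1 = w.1.length) := by omega
    rw [iAent, if_neg h1, if_neg h2, norm_zero]
    positivity
  · have h1 : w.1.length + 1 = v.length := by omega
    rw [iAent, if_pos h1]
    have hlen : ∀ b : Bool, v.length = (b :: w.1).length := by
      intro b; rw [List.length_cons]; omega
    by_cases ht : w.1 = v.tail
    · obtain ⟨a, t, hv⟩ : ∃ a t, v = a :: t := by
        cases v with
        | nil => simp at hr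
        | cons a t => exact ⟨a, t, rfl⟩
      have htt : w.1 = t := by rw [ht, hv, List.tail_cons]
      have hvt : v.length = t.length + 1 := by rw [hv]; simp
      have keyA : NentTree v (a :: w.1)
          = (((((v.length:ℝ) + 1) + ((2:ℝ)^v.length)⁻¹
            - 2 ^ (v.length + 1) * ((2:ℝ)^v.length)⁻¹) : ℝ) : ℂ) := by
        have hav : a :: w.1 = v := by rw [htt, hv]
        rw [hav, NentTree_eq v v rfl, if_pos rfl, cpl_self, List.length_reverse]
      have keyB : NentTree v ((!a) :: w.1)
          = ((((0 : ℝ) + ((2:ℝ)^v.length)⁻¹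
            - 2 ^ (v.length) * ((2:ℝ)^v.length)⁻¹) : ℝ) : ℂ) := by
        rw [NentTree_eq v _ (hlen (!a))]
        have hc : cpl v.reverse ((!a) :: w.1).reverse = v.length - 1 := by
          rw [htt, hv, List.reverse_cons, List.reverse_cons, cpl_append_same]
          rw [cpl_cons, if_neg (by simp), List.length_reverse, List.length_cons]
          omega
        have hne : v ≠ (!a) :: w.1 := by
          rw [htt, hv]
          intro hh
          simp at hh
        rw [hc, if_neg hne, show v.length - 1 + 1 = v.length by omega]
      have hsum : NentTree v (true :: w.1) + NentTree v (false :: w.1)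
          = NentTree v (a :: w.1) + NentTree v ((!a) :: w.1) := by
        cases a
        · rw [Bool.not_false, add_comm]
        · rw [Bool.not_true]
      have hone : (if v.tail = w.1 ∧ v ≠ [] then (1:ℂ) else 0) = 1 :=
        if_pos ⟨ht.symm, by rw [hv]; simp⟩
      rw [hone, hsum, keyA, keyB]
      have hstep : ((((v.length : ℝ) + 1/2 : ℝ)) : ℂ) * 1
          - ((((((v.length:ℝ) + 1) + ((2:ℝ)^v.length)⁻¹
              - 2 ^ (v.length + 1) * ((2:ℝ)^v.length)⁻¹) : ℝ) : ℂ)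
            + ((((0 : ℝ) + ((2:ℝ)^v.length)⁻¹
              - 2 ^ (v.length) * ((2:ℝ)^v.length)⁻¹) : ℝ) : ℂ))
          = (((5/2 - 2 * ((2:ℝ)^v.length)⁻¹ : ℝ)) : ℂ) := by
        rw [mul_one, ← Complex.ofReal_add, ← Complex.ofReal_sub]
        congr 1
        rw [pow_succ]
        field_simp
        ring
      rw [hstep, if_pos ht]
      have hb : ‖(((5/2 - 2 * ((2:ℝ)^v.length)⁻¹ : ℝ)) : ℂ)‖ ≤ 5/2 :=
        norm_ofReal_le (by linarith) (by linarith)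
      have hnn : (0:ℝ) ≤ 4 * 2 ^ (cpl v.reverse w.1.reverse) * ((2:ℝ) ^ v.length)⁻¹ := by
        positivity
      linarith
    · -- generic down case
      have hnotsuf : ¬ w.1 <:+ v := by
        intro hsuf
        apply ht
        have hd := List.suffix_iff_eq_drop.mp hsuf
        rw [show v.length - w.1.length = 1 by omega, List.drop_one] at hd
        exact hd
      have hpre : ¬ w.1.reverse <+: v.reverse := fun hp => hnotsuf (List.reverse_prefix.mp hp)
      have key : ∀ b : Bool, NentTree v (b :: w.1)
          = ((((0 : ℝ) + ((2:ℝ)^v.length)⁻¹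
            - 2 ^ (cpl v.reverse w.1.reverse + 1) * ((2:ℝ)^v.length)⁻¹) : ℝ) : ℂ) := by
        intro b
        rw [NentTree_eq v _ (hlen b)]
        have hc : cpl v.reverse (b :: w.1).reverse = cpl v.reverse w.1.reverse := by
          rw [List.reverse_cons]
          exact cpl_append_right v.reverse w.1.reverse [b] hpre
        have hne : v ≠ b :: w.1 := by
          intro hh
          exact ht (by simpa using (congrArg List.tail hh).symm)
        rw [hc, if_neg hne]
      have hzero : (if v.tail = w.1 ∧ v ≠ [] then (1:ℂ) else 0) = 0 :=
        if_neg (fun hh => ht hh.1.symm)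
      rw [hzero, key true, key false, mul_zero]
      have hstep : (0:ℂ) - (((((0 : ℝ) + ((2:ℝ)^v.length)⁻¹
              - 2 ^ (cpl v.reverse w.1.reverse + 1) * ((2:ℝ)^v.length)⁻¹) : ℝ) : ℂ)
            + ((((0 : ℝ) + ((2:ℝ)^v.length)⁻¹
              - 2 ^ (cpl v.reverse w.1.reverse + 1) * ((2:ℝ)^v.length)⁻¹) : ℝ) : ℂ))
          = (((4 * 2 ^ (cpl v.reverse w.1.reverse) * ((2:ℝ)^v.length)⁻¹
              - 2 * ((2:ℝ)^v.length)⁻¹ : ℝ)) : ℂ) := by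
        push_cast
        ring
      rw [hstep, if_neg ht]
      have h1m : (1:ℝ) ≤ (2:ℝ) ^ (cpl v.reverse w.1.reverse) :=
        one_le_two_pow_real _
      have hmi : (1:ℝ) * ((2:ℝ)^v.length)⁻¹
          ≤ (2:ℝ) ^ (cpl v.reverse w.1.reverse) * ((2:ℝ)^v.length)⁻¹ :=
        mul_le_mul_of_nonneg_right h1m hpos.le
      have hb := norm_ofReal_le
        (x := 4 * 2 ^ (cpl v.reverse w.1.reverse) * ((2:ℝ)^v.length)⁻¹
              - 2 * ((2:ℝ)^v.length)⁻¹)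
        (y := 4 * 2 ^ (cpl v.reverse w.1.reverse) * ((2:ℝ)^v.length)⁻¹)
        (by nlinarith) (by nlinarith)
      linarith

lemma up_bound (v : List Bool) (w : Sph (v.length + 1)) :
    ‖iAent v w.1‖ ≤ (if w.1.tail = v then (5/2 : ℝ) else 0)
      + 2 * 2 ^ (cpl v.reverse w.1.reverse) * ((2:ℝ) ^ v.length)⁻¹ := by
  have hw : w.1.length = v.length + 1 := w.2
  have hpos : (0:ℝ) < ((2:ℝ) ^ v.length)⁻¹ := by positivity
  have hpos1 : (0:ℝ) < ((2:ℝ) ^ (v.length + 1))⁻¹ := by positivity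
  have hile : ((2:ℝ) ^ (v.length + 1))⁻¹ ≤ 1 := inv_two_pow_le_one (v.length + 1)
  have h1 : ¬ (w.1.length + 1 = v.length) := by omega
  have h2 : v.length + 1 = w.1.length := by omega
  rw [iAent, if_neg h1, if_pos h2]
  have hlen : ∀ b : Bool, (b :: v).length = w.1.length := by
    intro b; rw [List.length_cons]; omega
  by_cases ht : w.1.tail = v
  · obtain ⟨c, t, hwv⟩ : ∃ c t, w.1 = c :: t := by
      cases hl : w.1 with
      | nil => rw [hl] at hw; simp at hw
      | cons c t => exact ⟨c, t, rfl⟩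
    have htt : t = v := by rw [hwv] at ht; simpa using ht
    subst htt
    have keyA : NentTree (c :: t) w.1
        = ((((((t.length + 1 : ℕ):ℝ) + 1) + ((2:ℝ)^(t.length + 1))⁻¹
          - 2 ^ ((t.length + 1) + 1) * ((2:ℝ)^(t.length + 1))⁻¹) : ℝ) : ℂ) := by
      rw [hwv, NentTree_eq (c :: t) (c :: t) rfl, if_pos rfl, cpl_self,
        List.length_reverse, List.length_cons]
    have keyB : NentTree ((!c) :: t) w.1
        = ((((0 : ℝ) + ((2:ℝ)^(t.length + 1))⁻¹
          - 2 ^ (t.length + 1) * ((2:ℝ)^(t.length + 1))⁻¹) : ℝ) : ℂ) := by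
      rw [hwv, NentTree_eq ((!c) :: t) (c :: t) rfl]
      have hc : cpl ((!c) :: t).reverse (c :: t).reverse = t.length := by
        rw [List.reverse_cons, List.reverse_cons, cpl_append_same]
        rw [cpl_cons, if_neg (by simp), List.length_reverse]
        omega
      have hne : (!c) :: t ≠ c :: t := by
        intro hh
        simp at hh
      rw [hc, if_neg hne, List.length_cons]
    have hsum : NentTree (true :: t) w.1 + NentTree (false :: t) w.1
        = NentTree (c :: t) w.1 + NentTree ((!c) :: t) w.1 := by
      cases c
      · rw [Bool.not_false, add_comm]
      · rw [Bool.not_true]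
    have hone : (if w.1.tail = t ∧ w.1 ≠ [] then (1:ℂ) else 0) = 1 :=
      if_pos ⟨ht, by rw [hwv]; simp⟩
    rw [hone, hsum, keyA, keyB, hw]
    have hstep : -((((t.length + 1 : ℕ):ℝ) + 1/2 : ℝ) : ℂ) * 1
        + (((((((t.length + 1 : ℕ):ℝ) + 1) + ((2:ℝ)^(t.length + 1))⁻¹
            - 2 ^ ((t.length + 1) + 1) * ((2:ℝ)^(t.length + 1))⁻¹) : ℝ) : ℂ)
          + ((((0 : ℝ) + ((2:ℝ)^(t.length + 1))⁻¹
            - 2 ^ (t.length + 1) * ((2:ℝ)^(t.length + 1))⁻¹) : ℝ) : ℂ))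
        = (((-(5/2) + 2 * ((2:ℝ)^(t.length + 1))⁻¹ : ℝ)) : ℂ) := by
      rw [mul_one, ← Complex.ofReal_add, ← Complex.ofReal_neg, ← Complex.ofReal_add]
      congr 1
      push_cast
      rw [pow_succ]
      field_simp
      ring
    rw [hstep, if_pos ht]
    have hb : ‖(((-(5/2) + 2 * ((2:ℝ)^(t.length + 1))⁻¹ : ℝ)) : ℂ)‖ ≤ 5/2 :=
      norm_ofReal_le (by linarith) (by linarith)
    have hnn : (0:ℝ) ≤ 2 * 2 ^ (cpl t.reverse w.1.reverse) * ((2:ℝ) ^ t.length)⁻¹ := by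
      positivity
    linarith
  · -- generic up case
    have hnotsuf : ¬ v <:+ w.1 := by
      intro hsuf
      apply ht
      have hd := List.suffix_iff_eq_drop.mp hsuf
      rw [show w.1.length - v.length = 1 by omega, List.drop_one] at hd
      exact hd.symm
    have hpre : ¬ v.reverse <+: w.1.reverse := fun hp => hnotsuf (List.reverse_prefix.mp hp)
    have key : ∀ b : Bool, NentTree (b :: v) w.1
        = ((((0 : ℝ) + ((2:ℝ)^(v.length + 1))⁻¹
          - 2 ^ (cpl v.reverse w.1.reverse + 1) * ((2:ℝ)^(v.length + 1))⁻¹) : ℝ) : ℂ) := by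
      intro b
      rw [NentTree_eq (b :: v) w.1 (hlen b)]
      have hc : cpl (b :: v).reverse w.1.reverse = cpl v.reverse w.1.reverse := by
        rw [List.reverse_cons]
        exact cpl_append_left v.reverse w.1.reverse [b] hpre
      have hne : b :: v ≠ w.1 := by
        intro hh
        exact ht (by simpa using (congrArg List.tail hh).symm)
      rw [hc, if_neg hne, List.length_cons]
    have hzero : (if w.1.tail = v ∧ w.1 ≠ [] then (1:ℂ) else 0) = 0 :=
      if_neg (fun hh => ht hh.1)
    rw [hzero, key true, key false, mul_zero, zero_add]
    have hstep : ((((0 : ℝ) + ((2:ℝ)^(v.length + 1))⁻¹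
          - 2 ^ (cpl v.reverse w.1.reverse + 1) * ((2:ℝ)^(v.length + 1))⁻¹) : ℝ) : ℂ)
        + ((((0 : ℝ) + ((2:ℝ)^(v.length + 1))⁻¹
          - 2 ^ (cpl v.reverse w.1.reverse + 1) * ((2:ℝ)^(v.length + 1))⁻¹) : ℝ) : ℂ)
        = (((((2:ℝ)^v.length)⁻¹
            - 2 * 2 ^ (cpl v.reverse w.1.reverse) * ((2:ℝ)^v.length)⁻¹ : ℝ)) : ℂ) := by
      rw [← Complex.ofReal_add]
      congr 1
      rw [pow_succ, pow_succ]
      field_simp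
      ring
    rw [hstep, if_neg ht]
    have h1m : (1:ℝ) ≤ (2:ℝ) ^ (cpl v.reverse w.1.reverse) := one_le_two_pow_real _
    have hmi : (1:ℝ) * ((2:ℝ)^v.length)⁻¹
        ≤ (2:ℝ) ^ (cpl v.reverse w.1.reverse) * ((2:ℝ)^v.length)⁻¹ :=
      mul_le_mul_of_nonneg_right h1m hpos.le
    have hZnn : (0:ℝ) ≤ (2:ℝ) ^ (cpl v.reverse w.1.reverse) * ((2:ℝ)^v.length)⁻¹ := by
      positivity
    have hb := norm_ofReal_le
      (x := ((2:ℝ)^v.length)⁻¹ - 2 * 2 ^ (cpl v.reverse w.1.reverse) * ((2:ℝ)^v.length)⁻¹)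
      (y := 2 * 2 ^ (cpl v.reverse w.1.reverse) * ((2:ℝ)^v.length)⁻¹)
      (by linarith) (by linarith)
    linarith

/-! ### Counting lemmas -/

lemma sum_ite_val (s : ℕ) (t : List Bool) (c : ℝ) (hc : 0 ≤ c) :
    (∑ w : Sph s, (if w.1 = t then c else 0)) ≤ c := by
  classical
  by_cases ht : t.length = s
  · have hstep : ∀ w : Sph s, (if w.1 = t then c else 0)
        = (if w = ⟨t, ht⟩ then c else 0) := by
      intro w
      by_cases h : w.1 = t
      · rw [if_pos h, if_pos (Subtype.ext h)]
      · rw [if_neg h, if_neg (fun hh => h (by rw [hh]))]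
    rw [Finset.sum_congr rfl (fun w _ => hstep w),
      Finset.sum_ite_eq' Finset.univ (⟨t, ht⟩ : Sph s) (fun _ => c),
      if_pos (Finset.mem_univ _)]
  · have hstep : ∀ w : Sph s, (if w.1 = t then c else 0) = 0 :=
      fun w => if_neg (fun h => ht (by rw [← h]; exact w.2))
    rw [Finset.sum_congr rfl (fun w _ => hstep w), Finset.sum_const_zero]
    exact hc

lemma card_filter_take (P : List Bool) (s k : ℕ) :
    ((Finset.univ : Finset (Sph s)).filter
        (fun w => w.1.reverse.take k = P.take k)).card ≤ 2 ^ (s - k) := by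
  classical
  refine le_trans (Finset.card_le_card_of_injOn
    (t := (Finset.univ : Finset (Sph (s - k))))
    (fun w : Sph s => (⟨(w.1.reverse.drop k).reverse, by simp [w.2]⟩ : Sph (s - k)))
    (fun _ _ => Finset.mem_univ _) ?_)
    (le_of_eq (by rw [Finset.card_univ, card_Sph]))
  intro w1 h1 w2 h2 heq
  simp only [Finset.coe_filter, Set.mem_setOf_eq, Finset.mem_univ, true_and] at h1 h2
  have h5 : w1.1.reverse.drop k = w2.1.reverse.drop k :=
    List.reverse_injective (congrArg Subtype.val heq)
  have h6 : w1.1.reverse = w2.1.reverse := by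
    rw [← List.take_append_drop k w1.1.reverse, ← List.take_append_drop k w2.1.reverse,
      h1, h2, h5]
  exact Subtype.ext (List.reverse_injective h6)

lemma sum_pow_cpl (P : List Bool) (s : ℕ) :
    (∑ w : Sph s, (2:ℝ) ^ (cpl P w.1.reverse)) ≤ ((s:ℝ) + 1) * 2 ^ s := by
  classical
  have hpt : ∀ w : Sph s, (2:ℝ) ^ (cpl P w.1.reverse)
      ≤ ∑ k ∈ Finset.range (s+1), (if P.take k = w.1.reverse.take k then (2:ℝ)^k else 0) := by
    intro w
    have hmem : cpl P w.1.reverse ∈ Finset.range (s+1) := Finset.mem_range.mpr (by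
      have hle := cpl_le_right P w.1.reverse
      rw [List.length_reverse, w.2] at hle
      omega)
    have hnn : ∀ i : ℕ, (0:ℝ) ≤ if P.take i = w.1.reverse.take i then (2:ℝ)^i else 0 :=
      fun i => by split_ifs <;> positivity
    have h := Finset.single_le_sum
      (f := fun k => if P.take k = w.1.reverse.take k then (2:ℝ)^k else 0)
      (fun i _ => hnn i) hmem
    rwa [if_pos (take_cpl_eq P w.1.reverse)] at h
  calc ∑ w : Sph s, (2:ℝ) ^ (cpl P w.1.reverse)
      ≤ ∑ w : Sph s, ∑ k ∈ Finset.range (s+1),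
          (if P.take k = w.1.reverse.take k then (2:ℝ)^k else 0) :=
        Finset.sum_le_sum (fun w _ => hpt w)
    _ = ∑ k ∈ Finset.range (s+1), ∑ w : Sph s,
          (if P.take k = w.1.reverse.take k then (2:ℝ)^k else 0) := Finset.sum_comm
    _ ≤ ∑ _k ∈ Finset.range (s+1), (2:ℝ)^s := by
        apply Finset.sum_le_sum
        intro k hk
        have hk' : k ≤ s := by
          have := Finset.mem_range.mp hk; omega
        have hcongr : ∀ w : Sph s, (if P.take k = w.1.reverse.take k then (2:ℝ)^k else 0)
            = (if w.1.reverse.take k = P.take k then (2:ℝ)^k else 0) := by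
          intro w
          by_cases h : P.take k = w.1.reverse.take k
          · rw [if_pos h, if_pos h.symm]
          · rw [if_neg h, if_neg (fun hh => h hh.symm)]
        rw [Finset.sum_congr rfl (fun w _ => hcongr w), ← Finset.sum_filter]
        rw [Finset.sum_const, nsmul_eq_mul]
        have hcard := card_filter_take P s k
        calc (((Finset.univ : Finset (Sph s)).filter
                (fun w => w.1.reverse.take k = P.take k)).card : ℝ) * 2^k
            ≤ ((2:ℝ) ^ (s-k)) * 2^k := by
              apply mul_le_mul_of_nonneg_right _ (by positivity)
              exact_mod_cast hcard
          _ = 2^s := by rw [← pow_add]; congr 1; omega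
    _ = ((s:ℝ) + 1) * 2 ^ s := by
        rw [Finset.sum_const, Finset.card_range, nsmul_eq_mul]
        push_cast
        ring

lemma up_ind (v : List Bool) (w : Sph (v.length + 1)) :
    (if w.1.tail = v then (5/2:ℝ) else 0)
      ≤ (if w.1 = true :: v then (5/2:ℝ) else 0)
        + (if w.1 = false :: v then (5/2:ℝ) else 0) := by
  obtain ⟨l, hl⟩ := w
  cases l with
  | nil => simp at hl
  | cons b t =>
    simp only [List.tail_cons, List.cons.injEq]
    by_cases hbv : t = v
    · subst hbv
      cases b <;> norm_num
    · simp only [hbv, and_false, ↓reduceIte]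
      norm_num

/-- Σ_w |⟨δ_v, iA δ_w⟩| = O(|v|) uniformly in v; in particular
there is an absolute constant C with Σ_w |⟨δ_v, iA δ_w⟩| ≤ C(|v| + 1). -/
theorem iA_row_sum_bound :
    ∃ C : ℝ, 0 < C ∧ ∀ v : List Bool,
      ∑' w : List Bool, ‖iAent v w‖ ≤ C * ((v.length : ℝ) + 1) := by
  classical
  refine ⟨20, by norm_num, fun v => ?_⟩
  have hpos : (0:ℝ) < ((2:ℝ) ^ v.length)⁻¹ := by positivity
  have hdisj : Disjoint
      ((Finset.univ : Finset (Sph (v.length - 1))).image Subtype.val)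
      ((Finset.univ : Finset (Sph (v.length + 1))).image Subtype.val) := by
    rw [Finset.disjoint_left]
    rintro a ha hb
    rw [Finset.mem_image] at ha hb
    obtain ⟨x, -, hx⟩ := ha
    obtain ⟨y, -, hy⟩ := hb
    have hx2 := x.2
    have hy2 := y.2
    rw [hx] at hx2
    rw [hy] at hy2
    omega
  have hvan : ∀ u ∉ (((Finset.univ : Finset (Sph (v.length - 1))).image Subtype.val)
      ∪ ((Finset.univ : Finset (Sph (v.length + 1))).image Subtype.val)),
      ‖iAent v u‖ = 0 := by
    intro u hu
    rw [Finset.mem_union] at hu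
    push_neg at hu
    have hu1 : ¬ (u.length + 1 = v.length) := by
      intro h
      exact hu.1 (Finset.mem_image.mpr ⟨⟨u, by omega⟩, Finset.mem_univ _, rfl⟩)
    have hu2 : ¬ (v.length + 1 = u.length) := by
      intro h
      exact hu.2 (Finset.mem_image.mpr ⟨⟨u, by omega⟩, Finset.mem_univ _, rfl⟩)
    rw [iAent, if_neg hu1, if_neg hu2, norm_zero]
  rw [tsum_eq_sum hvan, Finset.sum_union hdisj,
    Finset.sum_image (fun a _ b _ h => Subtype.ext h),
    Finset.sum_image (fun a _ b _ h => Subtype.ext h)]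
  have e2' : (2:ℝ) ^ (v.length - 1) ≤ 2 ^ v.length := by
    gcongr
    · norm_num
    · omega
  have e2 : (2:ℝ) ^ (v.length - 1) * ((2:ℝ) ^ v.length)⁻¹ ≤ 1 := by
    rw [← div_eq_mul_inv, div_le_one (by positivity)]
    exact e2'
  have e4 : (2:ℝ) ^ (v.length + 1) * ((2:ℝ) ^ v.length)⁻¹ = 2 := by
    rw [pow_succ]
    field_simp
  have hdown : (∑ w : Sph (v.length - 1), ‖iAent v w.1‖)
      ≤ 5/2 + 4 * ((v.length:ℝ) + 1) := by
    have step1 : (∑ w : Sph (v.length - 1), ‖iAent v w.1‖)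
        ≤ ∑ w : Sph (v.length - 1), ((if w.1 = v.tail then (5/2:ℝ) else 0)
            + 4 * 2 ^ (cpl v.reverse w.1.reverse) * ((2:ℝ) ^ v.length)⁻¹) :=
      Finset.sum_le_sum (fun w _ => down_bound v w)
    rw [Finset.sum_add_distrib] at step1
    have step2 : (∑ w : Sph (v.length - 1), (if w.1 = v.tail then (5/2:ℝ) else 0)) ≤ 5/2 :=
      sum_ite_val _ _ _ (by norm_num)
    have step3 : (∑ w : Sph (v.length - 1),
          4 * 2 ^ (cpl v.reverse w.1.reverse) * ((2:ℝ) ^ v.length)⁻¹)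
        ≤ 4 * ((v.length:ℝ) + 1) := by
      have hrw : (∑ w : Sph (v.length - 1),
            4 * 2 ^ (cpl v.reverse w.1.reverse) * ((2:ℝ) ^ v.length)⁻¹)
          = (4 * ((2:ℝ) ^ v.length)⁻¹)
            * ∑ w : Sph (v.length - 1), (2:ℝ) ^ (cpl v.reverse w.1.reverse) := by
        rw [Finset.mul_sum]
        exact Finset.sum_congr rfl (fun w _ => by ring)
      rw [hrw]
      have h := sum_pow_cpl v.reverse (v.length - 1)
      have e1 : (((v.length - 1 : ℕ):ℝ) + 1) ≤ (v.length:ℝ) + 1 := by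
        have h0 : ((v.length - 1 : ℕ):ℝ) ≤ (v.length:ℝ) :=
          Nat.cast_le.mpr (Nat.sub_le _ _)
        linarith
      calc (4 * ((2:ℝ)^v.length)⁻¹)
            * (∑ w : Sph (v.length-1), (2:ℝ)^(cpl v.reverse w.1.reverse))
          ≤ (4 * ((2:ℝ)^v.length)⁻¹)
            * ((((v.length-1:ℕ):ℝ) + 1) * 2 ^ (v.length-1)) :=
            mul_le_mul_of_nonneg_left h (by positivity)
        _ = 4 * ((((v.length-1:ℕ):ℝ) + 1)
            * ((2:ℝ)^(v.length-1) * ((2:ℝ)^v.length)⁻¹)) := by ring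
        _ ≤ 4 * (((v.length:ℝ) + 1) * 1) := by
            apply mul_le_mul_of_nonneg_left _ (by norm_num)
            exact mul_le_mul e1 e2 (by positivity) (by positivity)
        _ = 4 * ((v.length:ℝ) + 1) := by ring
    linarith
  have hup : (∑ w : Sph (v.length + 1), ‖iAent v w.1‖)
      ≤ 5 + 4 * ((v.length:ℝ) + 2) := by
    have step1 : (∑ w : Sph (v.length + 1), ‖iAent v w.1‖)
        ≤ ∑ w : Sph (v.length + 1), ((if w.1.tail = v then (5/2:ℝ) else 0)
            + 2 * 2 ^ (cpl v.reverse w.1.reverse) * ((2:ℝ) ^ v.length)⁻¹) :=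
      Finset.sum_le_sum (fun w _ => up_bound v w)
    rw [Finset.sum_add_distrib] at step1
    have step2 : (∑ w : Sph (v.length + 1), (if w.1.tail = v then (5/2:ℝ) else 0)) ≤ 5 := by
      have h := Finset.sum_le_sum (s := (Finset.univ : Finset (Sph (v.length+1)))) (fun w _ => up_ind v w)
      rw [Finset.sum_add_distrib] at h
      have h1 := sum_ite_val (v.length+1) (true :: v) (5/2 : ℝ) (by norm_num)
      have h2 := sum_ite_val (v.length+1) (false :: v) (5/2 : ℝ) (by norm_num)
      linarith
    have step3 : (∑ w : Sph (v.length + 1),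
          2 * 2 ^ (cpl v.reverse w.1.reverse) * ((2:ℝ) ^ v.length)⁻¹)
        ≤ 4 * ((v.length:ℝ) + 2) := by
      have hrw : (∑ w : Sph (v.length + 1),
            2 * 2 ^ (cpl v.reverse w.1.reverse) * ((2:ℝ) ^ v.length)⁻¹)
          = (2 * ((2:ℝ) ^ v.length)⁻¹)
            * ∑ w : Sph (v.length + 1), (2:ℝ) ^ (cpl v.reverse w.1.reverse) := by
        rw [Finset.mul_sum]
        exact Finset.sum_congr rfl (fun w _ => by ring)
      rw [hrw]
      have h := sum_pow_cpl v.reverse (v.length + 1)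
      calc (2 * ((2:ℝ)^v.length)⁻¹)
            * (∑ w : Sph (v.length+1), (2:ℝ)^(cpl v.reverse w.1.reverse))
          ≤ (2 * ((2:ℝ)^v.length)⁻¹)
            * ((((v.length+1:ℕ):ℝ) + 1) * 2 ^ (v.length+1)) :=
            mul_le_mul_of_nonneg_left h (by positivity)
        _ = 2 * (((((v.length+1:ℕ):ℝ)) + 1)
            * ((2:ℝ)^(v.length+1) * ((2:ℝ)^v.length)⁻¹)) := by ring
        _ = 2 * ((((v.length+1:ℕ):ℝ) + 1) * 2) := by rw [e4]
        _ = 4 * ((v.length:ℝ) + 2) := by push_cast; ring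
    linarith
  have hc : (0:ℝ) ≤ (v.length:ℝ) := Nat.cast_nonneg _
  linarith


end
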